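/- Let G be a finite p-group with G = AH where A is an abelian normal subgroup and H a subgroup, and suppose A ∩ H ⊆ A^p[A,H] ∩ Φ(H). Then G/Φ(G) ≅ (A/A^p[A,H]) × (H/Φ(H)), and consequently d(G) = d(A/A^p[A,H]) + d(H), where d denotes the minimal number of generators. -/

import Mathlib

open scoped Pointwise
open scoped commutatorElement

open Subgroup

section Aux

lemma coatom_facts' {p : ℕ} [Fact p.Prime] {P : Type} [Group P] [Finite P]
    (hP : IsPGroup p P) {M : Subgroup P} (hM : IsCoatom M) :
    (∀ x : P, x ^ p ∈ M) ∧ (∀ x y : P, ⁅x, y⁆ ∈ M) := by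
  have hnorm : M.Normal :=
    NormalizerCondition.normal_of_coatom M
      (normalizerCondition_of_isNilpotent (h := hP.isNilpotent)) hM
  set Q := P ⧸ M with hQ
  have hQp : IsPGroup p Q := hP.to_quotient M
  have hnt : Nontrivial Q := by
    obtain ⟨g, hg⟩ : ∃ g : P, g ∉ M := by
      by_contra hc
      push_neg at hc
      exact hM.1 ((Subgroup.eq_top_iff' M).2 hc)
    exact ⟨⟨QuotientGroup.mk g, 1, fun h => hg ((QuotientGroup.eq_one_iff g).1 h)⟩⟩
  obtain ⟨k, hk⟩ := IsPGroup.iff_card.mp hQp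
  have hk1 : k ≠ 0 := by
    rintro rfl
    simp at hk
    exact (Finite.one_lt_card_iff_nontrivial.2 hnt).ne' hk
  have hdvd : p ∣ Nat.card Q := hk ▸ dvd_pow_self p hk1
  letI := Fintype.ofFinite Q
  obtain ⟨x, hx⟩ := exists_prime_orderOf_dvd_card (G := Q) p
    (by rwa [← Nat.card_eq_fintype_card])
  have hxne : x ≠ 1 := by
    intro h
    rw [h, orderOf_one] at hx
    exact (Fact.out : p.Prime).one_lt.ne hx
  have hcomap : M < (zpowers x).comap (QuotientGroup.mk' M) := by
    refine lt_of_le_of_ne (fun m hm => ?_) (fun h => ?_)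
    · have : QuotientGroup.mk' M m = 1 := (QuotientGroup.eq_one_iff m).2 hm
      simp only [Subgroup.mem_comap, this]
      exact (zpowers x).one_mem
    · obtain ⟨g, rfl⟩ := QuotientGroup.mk'_surjective M x
      have hg : g ∈ (zpowers (QuotientGroup.mk' M g)).comap (QuotientGroup.mk' M) := by
        simp [Subgroup.mem_comap, mem_zpowers]
      rw [← h] at hg
      exact hxne ((QuotientGroup.eq_one_iff g).2 hg)
  have htop : zpowers x = ⊤ := by
    have h2 := hM.2 _ hcomap
    rw [eq_top_iff]
    intro q _
    obtain ⟨g, rfl⟩ := QuotientGroup.mk'_surjective M q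
    have hg : g ∈ (⊤ : Subgroup P) := trivial
    rw [← h2] at hg
    exact hg
  have hcard : Nat.card Q = p := by
    rw [← hx, ← Nat.card_zpowers x, htop, Subgroup.card_top]
  constructor
  · intro g
    rw [← QuotientGroup.eq_one_iff]
    calc QuotientGroup.mk (g ^ p) = (QuotientGroup.mk g : Q) ^ p := rfl
    _ = 1 := by rw [← hcard, pow_card_eq_one']
  · intro a b
    rw [← QuotientGroup.eq_one_iff]
    have : IsCyclic Q := isCyclic_of_prime_card hcard
    have hcomm : Commute (QuotientGroup.mk a : Q) (QuotientGroup.mk b) :=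
      (IsCyclic.commGroup (α := Q)).mul_comm _ _
    calc (QuotientGroup.mk ⁅a, b⁆ : Q)
        = ⁅(QuotientGroup.mk a : Q), QuotientGroup.mk b⁆ :=
          map_commutatorElement (QuotientGroup.mk' M) a b
    _ = 1 := commutatorElement_eq_one_iff_commute.2 hcomm

lemma mem_frattini_of_pGroup {p : ℕ} [Fact p.Prime] {P : Type} [Group P] [Finite P]
    (hP : IsPGroup p P) :
    (∀ x : P, x ^ p ∈ frattini P) ∧ (∀ x y : P, ⁅x, y⁆ ∈ frattini P) := by
  have hmem : ∀ z : P, (∀ M : Subgroup P, IsCoatom M → z ∈ M) → z ∈ frattini P := by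
    intro z hz
    rw [frattini, Order.radical]
    simp only [Subgroup.mem_iInf, Set.mem_setOf_eq]
    exact fun M hM => hz M hM
  exact ⟨fun x => hmem _ fun M hM => (coatom_facts' hP hM).1 x,
    fun x y => hmem _ fun M hM => (coatom_facts' hP hM).2 x y⟩

lemma rank_quotient_frattini (P : Type) [Group P] [Finite P] :
    Group.rank P = Group.rank (P ⧸ frattini P) := by
  refine le_antisymm ?_ (Group.rank_le_of_surjective (QuotientGroup.mk' (frattini P))
    (QuotientGroup.mk'_surjective _))
  obtain ⟨S, hcard, hclosure⟩ := Group.rank_spec (P ⧸ frattini P)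
  classical
  let T : Finset P := S.image Quotient.out
  have himg : QuotientGroup.mk' (frattini P) '' (T : Set P) = (S : Set _) := by
    ext q
    simp only [Finset.coe_image, Set.mem_image, T]
    constructor
    · rintro ⟨g, ⟨s, hs, rfl⟩, rfl⟩
      rw [QuotientGroup.mk'_apply, QuotientGroup.out_eq']; exact hs
    · intro hq
      exact ⟨q.out, ⟨q, hq, rfl⟩, by rw [QuotientGroup.mk'_apply, QuotientGroup.out_eq']⟩
  have hmap : (closure (T : Set P)).map (QuotientGroup.mk' (frattini P)) = ⊤ := by
    rw [MonoidHom.map_closure, himg, hclosure]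
  have hsup : closure (T : Set P) ⊔ frattini P = ⊤ := by
    have := congrArg (Subgroup.comap (QuotientGroup.mk' (frattini P))) hmap
    rwa [Subgroup.comap_map_eq, QuotientGroup.ker_mk',
      Subgroup.comap_top] at this
  have htop : closure (T : Set P) = ⊤ := frattini_nongenerating hsup
  calc Group.rank P ≤ T.card := Group.rank_le htop
    _ ≤ S.card := Finset.card_image_le
    _ = _ := hcard

lemma rank_eq_finrank_of_module (p : ℕ) [Fact p.Prime] (V : Type) [CommGroup V] [Finite V]
    [Module (ZMod p) (Additive V)] :
    Group.rank V = Module.finrank (ZMod p) (Additive V) := by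
  classical
  have hbridge : ∀ S : Set V, Subgroup.closure S = ⊤ ↔
      Submodule.span (ZMod p) (Additive.ofMul '' S) = ⊤ := by
    intro S
    have h1 : AddSubgroup.closure (Additive.ofMul '' S)
        = Subgroup.toAddSubgroup (Subgroup.closure S) := by
      apply le_antisymm
      · rw [AddSubgroup.closure_le]
        rintro x ⟨s, hs, rfl⟩
        show s ∈ Subgroup.closure S
        exact Subgroup.subset_closure hs
      · show Subgroup.toAddSubgroup (Subgroup.closure S)
          ≤ Subgroup.toAddSubgroup (Subgroup.toAddSubgroup.symm
              (AddSubgroup.closure (Additive.ofMul '' S)))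
        rw [Subgroup.toAddSubgroup.le_iff_le, Subgroup.closure_le]
        intro s hs
        show Additive.ofMul s ∈ AddSubgroup.closure (Additive.ofMul '' S)
        exact AddSubgroup.subset_closure ⟨s, hs, rfl⟩
    have h2 : Submodule.span (ZMod p) (Additive.ofMul '' S)
        = AddSubgroup.toZModSubmodule p (AddSubgroup.closure (Additive.ofMul '' S)) := by
      apply le_antisymm
      · rw [Submodule.span_le]
        exact AddSubgroup.subset_closure
      · show AddSubgroup.toZModSubmodule p (AddSubgroup.closure (Additive.ofMul '' S))
          ≤ AddSubgroup.toZModSubmodule p ((AddSubgroup.toZModSubmodule p).symm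
              (Submodule.span (ZMod p) (Additive.ofMul '' S)))
        rw [(AddSubgroup.toZModSubmodule p).le_iff_le, AddSubgroup.closure_le]
        exact Submodule.subset_span
    rw [h2, h1]
    have htop : (AddSubgroup.toZModSubmodule p) (Subgroup.toAddSubgroup (⊤ : Subgroup V)) = ⊤ := by
      simp
    constructor
    · intro h; rw [h, htop]
    · intro h
      apply Subgroup.toAddSubgroup.injective
      apply (AddSubgroup.toZModSubmodule p).injective
      rw [h, htop]
  have : Module.Finite (ZMod p) (Additive V) := Module.Finite.of_finite
  refine le_antisymm ?_ ?_
  · let b := Module.finBasis (ZMod p) (Additive V)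
    let T : Finset V := Finset.image (fun i => Additive.toMul (b i)) Finset.univ
    have hT : Subgroup.closure (T : Set V) = ⊤ := by
      rw [hbridge]
      have himg : Additive.ofMul '' (T : Set V) = Set.range b := by
        ext x
        simp only [Finset.coe_image, Set.mem_image, Set.mem_range, Finset.mem_coe,
          Finset.mem_image, Finset.mem_univ, true_and, T]
        constructor
        · rintro ⟨v, ⟨i, rfl⟩, rfl⟩; exact ⟨i, rfl⟩
        · rintro ⟨i, rfl⟩; exact ⟨Additive.toMul (b i), ⟨i, rfl⟩, rfl⟩
      rw [himg, b.span_eq]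
    calc Group.rank V ≤ T.card := Group.rank_le hT
      _ ≤ _ := by
        simpa [T] using Finset.card_image_le
          (s := (Finset.univ : Finset (Fin (Module.finrank (ZMod p) (Additive V)))))
          (f := fun i => Additive.toMul (b i))
  · obtain ⟨S, hcard, hclosure⟩ := Group.rank_spec V
    rw [hbridge] at hclosure
    let S' : Finset (Additive V) := S.image Additive.ofMul
    have hS' : Submodule.span (ZMod p) (S' : Set (Additive V)) = ⊤ := by
      rw [← hclosure]
      congr 1
      simp [S']
    have h1 : Module.finrank (ZMod p) (Additive V)
        ≤ S'.card := by
      have := finrank_span_finset_le_card (R := ZMod p) S'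
      rwa [Set.finrank, hS', finrank_top] at this
    calc Module.finrank (ZMod p) (Additive V) ≤ S'.card := h1
      _ ≤ S.card := Finset.card_image_le
      _ = _ := hcard

abbrev expModule (p : ℕ) [Fact p.Prime] (V : Type) [CommGroup V] (hV : ∀ x : V, x ^ p = 1) :
    Module (ZMod p) (Additive V) :=
  AddCommGroup.zmodModule (fun x => by
    show Additive.ofMul (Additive.toMul x ^ p) = 0
    rw [hV]; rfl)

lemma rank_prod_of_exp_p (p : ℕ) [Fact p.Prime] (V W : Type) [CommGroup V] [CommGroup W]
    [Finite V] [Finite W] (hV : ∀ x : V, x ^ p = 1) (hW : ∀ x : W, x ^ p = 1) :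
    Group.rank (V × W) = Group.rank V + Group.rank W := by
  letI mV : Module (ZMod p) (Additive V) := expModule p V hV
  letI mW : Module (ZMod p) (Additive W) := expModule p W hW
  letI mVW : Module (ZMod p) (Additive (V × W)) :=
    expModule p (V × W) (fun x => Prod.ext (hV x.1) (hW x.2))
  haveI : Module.Finite (ZMod p) (Additive V) := Module.Finite.of_finite
  haveI : Module.Finite (ZMod p) (Additive W) := Module.Finite.of_finite
  let e₀ : Additive (V × W) ≃+ Additive V × Additive W :=
    { toFun := fun x => (Additive.ofMul (Additive.toMul x).1, Additive.ofMul (Additive.toMul x).2)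
      invFun := fun x => Additive.ofMul (Additive.toMul x.1, Additive.toMul x.2)
      left_inv := fun _ => rfl
      right_inv := fun _ => rfl
      map_add' := fun _ _ => rfl }
  let e : Additive (V × W) ≃ₗ[ZMod p] Additive V × Additive W :=
    { e₀ with map_smul' := fun c x => ZMod.map_smul (e₀.toAddMonoidHom) c x }
  haveI f1 : Module.Free (ZMod p) (Additive V) := Module.Free.of_divisionRing (ZMod p) (Additive V)
  haveI f2 : Module.Free (ZMod p) (Additive W) := Module.Free.of_divisionRing (ZMod p) (Additive W)
  have h1 := rank_eq_finrank_of_module p (V × W)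
  have h2 := rank_eq_finrank_of_module p V
  have h3 := rank_eq_finrank_of_module p W
  have h4 : Module.finrank (ZMod p) (Additive (V × W))
      = Module.finrank (ZMod p) (Additive V) + Module.finrank (ZMod p) (Additive W) := by
    rw [e.finrank_eq]
    exact @Module.finrank_prod (ZMod p) (Additive V) (Additive W) _ _ _ mV mW
      (inferInstance) f1 f2 ‹_› ‹_›
  omega

lemma frattini_eq_bot_of_exp_p (p : ℕ) [Fact p.Prime] (V : Type) [CommGroup V] [Finite V]
    (hV : ∀ x : V, x ^ p = 1) : frattini V = ⊥ := by
  rw [eq_bot_iff]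
  intro x hx
  simp only [Subgroup.mem_bot]
  by_contra hxne
  -- find a maximal subgroup avoiding x
  have hwf : WellFounded ((· > ·) : Subgroup V → Subgroup V → Prop) :=
    (Finite.to_wellFoundedGT).wf
  obtain ⟨M, hMS, hMmax⟩ := hwf.has_min {S : Subgroup V | x ∉ S}
    ⟨⊥, by simpa using hxne⟩
  have hmem : ∀ T : Subgroup V, M < T → x ∈ T := by
    intro T hT
    by_contra hxT
    exact hMmax T hxT hT
  -- every element lies in M ⊔ zpowers x
  have hall : ∀ y : V, y ∈ M ⊔ zpowers x := by
    intro y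
    by_cases hy : y ∈ M
    · exact Subgroup.mem_sup_left hy
    · have hlt : M < M ⊔ zpowers y :=
        lt_of_le_of_ne le_sup_left (fun h => hy (h ▸ Subgroup.mem_sup_right (mem_zpowers y)))
      have hx' : x ∈ M ⊔ zpowers y := hmem _ hlt
      rw [Subgroup.mem_sup] at hx'
      obtain ⟨m, hm, z, hz, hmz⟩ := hx'
      obtain ⟨k, rfl⟩ := hz
      have hyp : y ^ (p : ℤ) = 1 := by
        rw [zpow_natCast, hV]
      by_cases hdvd : (p : ℤ) ∣ k
      · obtain ⟨c, rfl⟩ := hdvd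
        change m * y ^ ((p : ℤ) * c) = x at hmz
        rw [zpow_mul, hyp, one_zpow, mul_one] at hmz
        exact absurd (hmz ▸ hm) hMS
      · -- k coprime to p
        have hgcd : IsCoprime k (p : ℤ) := by
          rw [Int.isCoprime_iff_gcd_eq_one]
          have h2 : Int.gcd k p ∣ p := by
            simpa [Int.gcd] using Nat.gcd_dvd_right k.natAbs p
          rcases (Nat.Prime.eq_one_or_self_of_dvd (Fact.out : p.Prime) _ h2) with h | h
          · exact h
          · exfalso
            apply hdvd
            have hd := Int.gcd_dvd_left (a := k) (b := (p : ℤ))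
            rw [h] at hd
            exact_mod_cast hd
        obtain ⟨u, v, huv⟩ := hgcd
        have : y = (y ^ k) ^ u * (y ^ (p : ℤ)) ^ v := by
          rw [← zpow_mul, ← zpow_mul, ← zpow_add, mul_comm k u, mul_comm ((p : ℤ)) v]
          rw [huv, zpow_one]
        rw [hyp, one_zpow, mul_one] at this
        rw [this]
        have hyk : y ^ k ∈ M ⊔ zpowers x := by
          have : y ^ k = m⁻¹ * x := by
            rw [← hmz]; group
          rw [this]
          exact mul_mem (Subgroup.mem_sup_left (inv_mem hm))
            (Subgroup.mem_sup_right (mem_zpowers x))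
        exact zpow_mem hyk u
  have hMtop : M ⊔ zpowers x = ⊤ := by
    rw [eq_top_iff]; exact fun y _ => hall y
  have hcoatom : IsCoatom M := by
    constructor
    · intro h
      exact hMS (h ▸ trivial)
    · intro T hT
      rw [eq_top_iff, ← hMtop]
      exact sup_le hT.le (by
        rw [zpowers_le]
        exact hmem T hT)
  exact hMS (frattini_le_coatom hcoatom hx)

lemma aux_map_frattini_le_coatom {p : ℕ} [Fact p.Prime] {G : Type} [Group G] [Finite G]
    (hG : IsPGroup p G) (H : Subgroup G) {M : Subgroup G} (hM : IsCoatom M) :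
    (frattini ↥H).map H.subtype ≤ M := by
  by_cases hHM : H ≤ M
  · exact (Subgroup.map_subtype_le _).trans hHM
  · have hMn : M.Normal :=
      NormalizerCondition.normal_of_coatom M
        (normalizerCondition_of_isNilpotent (h := hG.isNilpotent)) hM
    have hco : IsCoatom (M.comap H.subtype) := by
      constructor
      · intro htop
        exact hHM fun h hh => by
          have : (⟨h, hh⟩ : ↥H) ∈ M.comap H.subtype := htop ▸ trivial
          exact this
      · intro T hT
        obtain ⟨t, htT, htM⟩ := SetLike.exists_of_lt hT
        have htM' : (t : G) ∉ M := htM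
        have hsup : M ⊔ T.map H.subtype = ⊤ := by
          apply hM.2
          refine lt_of_le_of_ne le_sup_left (fun hEq => htM' ?_)
          have : (t : G) ∈ M ⊔ T.map H.subtype := Subgroup.mem_sup_right ⟨t, htT, rfl⟩
          rwa [← hEq] at this
        rw [eq_top_iff]
        intro x _
        have hx : (x : G) ∈ M ⊔ T.map H.subtype := hsup ▸ trivial
        have hx' : (x : G) ∈ (M : Set G) * (T.map H.subtype : Set G) := by
          rw [← Subgroup.normal_mul]; exact hx
        obtain ⟨m, hm, y, hy, hmy⟩ := hx'
        obtain ⟨t₀, ht₀, rfl⟩ := hy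
        have hmy' : m * (t₀ : G) = (x : G) := hmy
        have hmH : m ∈ H := by
          have hmeq : m = (x : G) * (t₀ : G)⁻¹ := by
            rw [← hmy']; group
          rw [hmeq]
          exact H.mul_mem x.2 (H.inv_mem t₀.2)
        have hmT : (⟨m, hmH⟩ : ↥H) ∈ T := hT.le (by simpa [Subgroup.mem_subgroupOf] using hm)
        have hxeq : x = ⟨m, hmH⟩ * t₀ := Subtype.ext hmy'.symm
        rw [hxeq]
        exact T.mul_mem hmT ht₀
    calc (frattini ↥H).map H.subtype ≤ (M.comap H.subtype).map H.subtype :=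
          Subgroup.map_mono (frattini_le_coatom hco)
      _ ≤ M := Subgroup.map_comap_le _ _

end Aux


/-- `A^p[A,H]`: the subgroup generated by `p`-th powers of elements of `A`
together with commutators `[a,h]` for `a ∈ A`, `h ∈ H`. -/
def pPowComm (p : ℕ) {G : Type} [Group G] (A H : Subgroup G) : Subgroup G :=
  Subgroup.closure ({x | ∃ a ∈ A, x = a ^ p} ∪ {x | ∃ a ∈ A, ∃ h ∈ H, x = ⁅a, h⁆})

open scoped IsMulCommutative in
/-- If `G = AH` with `A` abelian normal and `A ∩ H ⊆ A^p[A,H] ∩ Φ(H)`, then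
`G/Φ(G) ≅ (A/A^p[A,H]) × (H/Φ(H))` and `d(G) = d(A/A^p[A,H]) + d(H)`. -/
theorem frattiniQuotient_and_rank_of_decomposition (p : ℕ) [Fact p.Prime] (G : Type)
    [Group G] [Finite G] (hG : IsPGroup p G) (A H : Subgroup G) [A.Normal]
    [IsMulCommutative A]
    (hprod : (A : Set G) * (H : Set G) = Set.univ)
    (hcap : A ⊓ H ≤ pPowComm p A H ⊓ (frattini ↥H).map H.subtype)
    [hN : (frattini ↥H).Normal] :
    Nonempty ((G ⧸ frattini G) ≃*
      (↥A ⧸ (pPowComm p A H).subgroupOf A) × (↥H ⧸ frattini ↥H)) ∧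
    Group.rank G = Group.rank (↥A ⧸ (pPowComm p A H).subgroupOf A) + Group.rank ↥H := by
  classical
  set K := pPowComm p A H with hKdef
  set F := (frattini ↥H).map H.subtype with hFdef
  set SgenL : Set G := {x | ∃ a ∈ A, x = a ^ p} with hSL
  set SgenR : Set G := {x | ∃ a ∈ A, ∃ h ∈ H, x = ⁅a, h⁆} with hSR
  have hKgen : K = Subgroup.closure (SgenL ∪ SgenR) := rfl
  have hsplit : ∀ g : G, ∃ a ∈ A, ∃ h ∈ H, a * h = g := by
    intro g
    have : g ∈ (A : Set G) * (H : Set G) := by rw [hprod]; trivial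
    obtain ⟨a, ha, h, hh, rfl⟩ := this
    exact ⟨a, ha, h, hh, rfl⟩
  have hpowK : ∀ a ∈ A, a ^ p ∈ K :=
    fun a ha => Subgroup.subset_closure (Or.inl ⟨a, ha, rfl⟩)
  have hcommK : ∀ a ∈ A, ∀ h ∈ H, ⁅a, h⁆ ∈ K :=
    fun a ha h hh => Subgroup.subset_closure (Or.inr ⟨a, ha, h, hh, rfl⟩)
  -- the generating set is contained in A
  have hgenA : SgenL ∪ SgenR ⊆ (A : Set G) := by
    rintro x (⟨a, ha, rfl⟩ | ⟨a, ha, h, hh, rfl⟩)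
    · exact A.pow_mem ha p
    · have h1 : h * a⁻¹ * h⁻¹ ∈ A := ‹A.Normal›.conj_mem _ (A.inv_mem ha) h
      have : ⁅a, h⁆ = a * (h * a⁻¹ * h⁻¹) := by group
      rw [this]
      exact A.mul_mem ha h1
  have hKA : K ≤ A := by
    rw [hKgen, Subgroup.closure_le]
    exact hgenA
  have hFH : F ≤ H := Subgroup.map_subtype_le _
  -- p-group structure on H and its frattini facts
  have hHp : IsPGroup p ↥H := hG.to_subgroup H
  have hfratH := mem_frattini_of_pGroup hHp
  have hFpow : ∀ h (hh : h ∈ H), h ^ p ∈ F := by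
    intro h hh
    exact ⟨(⟨h, hh⟩ : ↥H) ^ p, hfratH.1 _, rfl⟩
  have hFcomm : ∀ h (hh : h ∈ H) h' (hh' : h' ∈ H), ⁅h, h'⁆ ∈ F := by
    intro h hh h' hh'
    exact ⟨⁅(⟨h, hh⟩ : ↥H), ⟨h', hh'⟩⁆, hfratH.2 _ _, rfl⟩
  -- conjugation stabilizes the generating set when conjugating by elements of H,
  -- and fixes pointwise when conjugating by elements of A
  have hconjA : ∀ a ∈ A, ∀ x ∈ (A : Set G), a * x * a⁻¹ = x := by
    intro a ha x hx
    rw [mul_comm_of_mem_isMulCommutative A ha hx]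
    group
  have hconjH : ∀ h ∈ H, ∀ x ∈ SgenL ∪ SgenR, h * x * h⁻¹ ∈ SgenL ∪ SgenR := by
    rintro h hh x (⟨a, ha, rfl⟩ | ⟨a, ha, h', hh', rfl⟩)
    · refine Or.inl ⟨h * a * h⁻¹, ‹A.Normal›.conj_mem a ha h, ?_⟩
      rw [conj_pow]
    · refine Or.inr ⟨h * a * h⁻¹, ‹A.Normal›.conj_mem a ha h, h * h' * h⁻¹,
        H.mul_mem (H.mul_mem hh hh') (H.inv_mem hh), ?_⟩
      simp [commutatorElement_def]
      group
  have hconj : ∀ g : G, ∀ x ∈ SgenL ∪ SgenR, g * x * g⁻¹ ∈ K := by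
    intro g x hx
    obtain ⟨a, ha, h, hh, rfl⟩ := hsplit g
    have h1 : h * x * h⁻¹ ∈ SgenL ∪ SgenR := hconjH h hh x hx
    have h2 : a * (h * x * h⁻¹) * a⁻¹ = h * x * h⁻¹ := hconjA a ha _ (hgenA h1)
    have : a * h * x * (a * h)⁻¹ = a * (h * x * h⁻¹) * a⁻¹ := by group
    rw [this, h2]
    exact Subgroup.subset_closure h1
  haveI hKnormal : K.Normal := by
    constructor
    intro n hn g
    have hmap : K.map (MulAut.conj g).toMonoidHom ≤ K := by
      rw [hKgen, MonoidHom.map_closure, Subgroup.closure_le]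
      rintro _ ⟨x, hx, rfl⟩
      exact hconj g x hx
    exact hmap ⟨n, hn, rfl⟩
  set N := K ⊔ F with hNdef
  have hKN : K ≤ N := le_sup_left
  have hFN : F ≤ N := le_sup_right
  -- conjugates of F land in N
  have hconjF : ∀ g : G, ∀ x ∈ F, g * x * g⁻¹ ∈ N := by
    intro g x hx
    obtain ⟨a, ha, h, hh, rfl⟩ := hsplit g
    have h1 : h * x * h⁻¹ ∈ F := by
      obtain ⟨y, hy, rfl⟩ := hx
      exact ⟨(⟨h, hh⟩ : ↥H) * y * (⟨h, hh⟩ : ↥H)⁻¹, hN.conj_mem y hy _, rfl⟩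
    set z := h * x * h⁻¹ with hz
    have h2 : a * h * x * (a * h)⁻¹ = a * z * a⁻¹ := by rw [hz]; group
    have h3 : a * z * a⁻¹ = ⁅a, z⁆ * z := by group
    rw [h2, h3]
    exact N.mul_mem (hKN (hcommK a ha z (hFH h1))) (hFN h1)
  haveI hNnormal : N.Normal := by
    constructor
    intro n hn g
    have hmap : N.map (MulAut.conj g).toMonoidHom ≤ N := by
      rw [hNdef, Subgroup.map_sup]
      refine sup_le ?_ ?_
      · rintro _ ⟨x, hx, rfl⟩
        exact hKN (hKnormal.conj_mem x hx g)
      · rintro _ ⟨x, hx, rfl⟩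
        exact hconjF g x hx
    exact hmap ⟨n, hn, rfl⟩
  -- frattini G = N
  -- commutator/power membership in N via quotient commutativity data
  have cm : ∀ u v : G, ⁅u, v⁆ ∈ N →
      Commute (QuotientGroup.mk u : G ⧸ N) (QuotientGroup.mk v) := by
    intro u v huv
    rw [← commutatorElement_eq_one_iff_commute]
    have : (QuotientGroup.mk ⁅u, v⁆ : G ⧸ N) = ⁅(QuotientGroup.mk u : G ⧸ N), QuotientGroup.mk v⁆ :=
      map_commutatorElement (QuotientGroup.mk' N) u v
    rw [← this, QuotientGroup.eq_one_iff]
    exact huv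
  have hcommQ : ∀ x y : G ⧸ N, x * y = y * x := by
    intro x y
    induction x using QuotientGroup.induction_on with
    | H g =>
    induction y using QuotientGroup.induction_on with
    | H g' =>
    obtain ⟨a, ha, h, hh, rfl⟩ := hsplit g
    obtain ⟨a', ha', h', hh', rfl⟩ := hsplit g'
    have caa : Commute (QuotientGroup.mk a : G ⧸ N) (QuotientGroup.mk a') :=
      cm a a' (by
        have : ⁅a, a'⁆ = 1 := commutatorElement_eq_one_iff_commute.2
          (mul_comm_of_mem_isMulCommutative A ha ha')
        rw [this]; exact N.one_mem)
    have cah : Commute (QuotientGroup.mk a : G ⧸ N) (QuotientGroup.mk h') :=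
      cm a h' (hKN (hcommK a ha h' hh'))
    have cha : Commute (QuotientGroup.mk h : G ⧸ N) (QuotientGroup.mk a') :=
      (cm a' h (hKN (hcommK a' ha' h hh))).symm
    have chh : Commute (QuotientGroup.mk h : G ⧸ N) (QuotientGroup.mk h') :=
      cm h h' (hFN (hFcomm h hh h' hh'))
    have hmk : ∀ u v : G, (QuotientGroup.mk (u * v) : G ⧸ N)
        = QuotientGroup.mk u * QuotientGroup.mk v := fun _ _ => rfl
    rw [hmk, hmk]
    exact ((caa.mul_right cah).mul_left (cha.mul_right chh)).eq
  have hexpQ : ∀ x : G ⧸ N, x ^ p = 1 := by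
    intro x
    induction x using QuotientGroup.induction_on with
    | H g =>
    obtain ⟨a, ha, h, hh, rfl⟩ := hsplit g
    have cah : Commute (QuotientGroup.mk a : G ⧸ N) (QuotientGroup.mk h) :=
      cm a h (hKN (hcommK a ha h hh))
    have hmk : (QuotientGroup.mk (a * h) : G ⧸ N)
        = QuotientGroup.mk a * QuotientGroup.mk h := rfl
    rw [hmk, cah.mul_pow]
    have h1 : (QuotientGroup.mk a : G ⧸ N) ^ p = 1 := by
      rw [← QuotientGroup.mk_pow, QuotientGroup.eq_one_iff]
      exact hKN (hpowK a ha)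
    have h2 : (QuotientGroup.mk h : G ⧸ N) ^ p = 1 := by
      rw [← QuotientGroup.mk_pow, QuotientGroup.eq_one_iff]
      exact hFN (hFpow h hh)
    rw [h1, h2, mul_one]
  have hfrat : frattini G = N := by
    apply le_antisymm
    · -- frattini G ≤ N via the elementary abelian quotient
      letI : CommGroup (G ⧸ N) := { (inferInstance : Group (G ⧸ N)) with mul_comm := hcommQ }
      have hbot : frattini (G ⧸ N) = ⊥ := frattini_eq_bot_of_exp_p p (G ⧸ N) hexpQ
      have hle := frattini_le_comap_frattini_of_surjective
        (QuotientGroup.mk'_surjective N)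
      rw [hbot] at hle
      intro x hx
      have := hle hx
      rw [Subgroup.mem_comap, Subgroup.mem_bot, QuotientGroup.mk'_apply,
        QuotientGroup.eq_one_iff] at this
      exact this
    · refine sup_le ?_ ?_
      · rw [hKgen, Subgroup.closure_le]
        rintro x (⟨a, ha, rfl⟩ | ⟨a, ha, h, hh, rfl⟩)
        · exact (mem_frattini_of_pGroup hG).1 a
        · exact (mem_frattini_of_pGroup hG).2 a h
      · -- F ≤ frattini G
        have : ∀ M ∈ {S : Subgroup G | IsCoatom S}, F ≤ M := by
          intro M hM
          exact aux_map_frattini_le_coatom hG H hM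
        rw [frattini, Order.radical]
        exact le_iInf₂ this
  -- the isomorphism
  have hKfrat : K ≤ frattini G := hfrat ▸ hKN
  have hFfrat : F ≤ frattini G := hfrat ▸ hFN
  let φ₁ : ↥A →* G ⧸ frattini G := (QuotientGroup.mk' (frattini G)).comp A.subtype
  let φ₂ : ↥H →* G ⧸ frattini G := (QuotientGroup.mk' (frattini G)).comp H.subtype
  have hφ₁ : ∀ x ∈ K.subgroupOf A, φ₁ x = 1 := by
    intro x hx
    rw [Subgroup.mem_subgroupOf] at hx
    exact (QuotientGroup.eq_one_iff _).2 (hKfrat hx)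
  have hφ₂ : ∀ x ∈ frattini ↥H, φ₂ x = 1 := by
    intro x hx
    exact (QuotientGroup.eq_one_iff _).2 (hFfrat ⟨x, hx, rfl⟩)
  let f₁ : (↥A ⧸ K.subgroupOf A) →* G ⧸ frattini G :=
    QuotientGroup.lift (K.subgroupOf A) φ₁ hφ₁
  let f₂ : (↥H ⧸ frattini ↥H) →* G ⧸ frattini G :=
    QuotientGroup.lift (frattini ↥H) φ₂ hφ₂
  have hcomm12 : ∀ x y, Commute (f₁ x) (f₂ y) := by
    intro x y
    induction x using QuotientGroup.induction_on with
    | H a =>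
    induction y using QuotientGroup.induction_on with
    | H h =>
    show Commute (QuotientGroup.mk (a : G)) (QuotientGroup.mk (h : G))
    rw [← commutatorElement_eq_one_iff_commute]
    have : (QuotientGroup.mk ⁅(a : G), (h : G)⁆ : G ⧸ frattini G)
        = ⁅(QuotientGroup.mk (a : G) : G ⧸ frattini G), QuotientGroup.mk (h : G)⁆ :=
      map_commutatorElement (QuotientGroup.mk' (frattini G)) _ _
    rw [← this, QuotientGroup.eq_one_iff]
    exact hKfrat (hcommK _ a.2 _ h.2)
  let Φ : ((↥A ⧸ K.subgroupOf A) × (↥H ⧸ frattini ↥H)) →* G ⧸ frattini G :=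
    MonoidHom.noncommCoprod f₁ f₂ hcomm12
  have hΦval : ∀ (a : ↥A) (h : ↥H),
      Φ (QuotientGroup.mk a, QuotientGroup.mk h) = QuotientGroup.mk ((a : G) * (h : G)) := by
    intro a h
    rfl
  have hsurj : Function.Surjective Φ := by
    intro q
    induction q using QuotientGroup.induction_on with
    | H g =>
    obtain ⟨a, ha, h, hh, rfl⟩ := hsplit g
    exact ⟨(QuotientGroup.mk ⟨a, ha⟩, QuotientGroup.mk ⟨h, hh⟩), hΦval ⟨a, ha⟩ ⟨h, hh⟩⟩
  have hinj : Function.Injective Φ := by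
    rw [injective_iff_map_eq_one]
    rintro ⟨x, y⟩ hxy
    induction x using QuotientGroup.induction_on with
    | H a =>
    induction y using QuotientGroup.induction_on with
    | H h =>
    rw [hΦval a h, QuotientGroup.eq_one_iff, hfrat] at hxy
    have hxy' : ((a : G) * (h : G)) ∈ (K : Set G) * (F : Set G) := by
      rw [← Subgroup.normal_mul]; exact hxy
    obtain ⟨k, hk, f, hf, hkf⟩ := hxy'
    have hkf' : k * f = (a : G) * (h : G) := hkf
    have ha' : (a : G) = k * f * (h : G)⁻¹ := by rw [hkf']; group
    set w := k⁻¹ * (a : G) with hw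
    have hwA : w ∈ A := A.mul_mem (A.inv_mem (hKA hk)) a.2
    have hwH : w ∈ H := by
      have : w = f * (h : G)⁻¹ := by
        rw [hw, ha']; group
      rw [this]
      exact H.mul_mem (hFH hf) (H.inv_mem h.2)
    have hwKF : w ∈ K ⊓ F := hcap ⟨hwA, hwH⟩
    have haK : (a : G) ∈ K := by
      have : (a : G) = k * w := by rw [hw]; group
      rw [this]
      exact K.mul_mem hk hwKF.1
    have hhF : (h : G) ∈ F := by
      have : (h : G) = w⁻¹ * f := by
        have h1 : w = f * (h : G)⁻¹ := by rw [hw, ha']; group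
        rw [h1]; group
      rw [this]
      exact F.mul_mem (F.inv_mem hwKF.2) hf
    refine Prod.ext ?_ ?_
    · show (QuotientGroup.mk a : ↥A ⧸ K.subgroupOf A) = 1
      rw [QuotientGroup.eq_one_iff, Subgroup.mem_subgroupOf]
      exact haK
    · show (QuotientGroup.mk h : ↥H ⧸ frattini ↥H) = 1
      rw [QuotientGroup.eq_one_iff]
      obtain ⟨y, hy, hyeq⟩ := hhF
      have : y = h := Subtype.ext hyeq
      rwa [← this]
  have hiso : Nonempty ((G ⧸ frattini G) ≃*
      (↥A ⧸ K.subgroupOf A) × (↥H ⧸ frattini ↥H)) :=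
    ⟨(MulEquiv.ofBijective Φ ⟨hinj, hsurj⟩).symm⟩
  refine ⟨hiso, ?_⟩
  -- rank computation
  haveI : Finite (↥A ⧸ K.subgroupOf A) := Quotient.finite _
  haveI : Finite (↥H ⧸ frattini ↥H) := Quotient.finite _
  have hcommHQ : ∀ x y : ↥H ⧸ frattini ↥H, x * y = y * x := by
    intro x y
    induction x using QuotientGroup.induction_on with
    | H a =>
    induction y using QuotientGroup.induction_on with
    | H b =>
    have : Commute (QuotientGroup.mk a : ↥H ⧸ frattini ↥H) (QuotientGroup.mk b) := by
      rw [← commutatorElement_eq_one_iff_commute]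
      have heq : (QuotientGroup.mk ⁅a, b⁆ : ↥H ⧸ frattini ↥H)
          = ⁅(QuotientGroup.mk a : ↥H ⧸ frattini ↥H), QuotientGroup.mk b⁆ :=
        map_commutatorElement (QuotientGroup.mk' (frattini ↥H)) a b
      rw [← heq, QuotientGroup.eq_one_iff]
      exact hfratH.2 a b
    exact this.eq
  letI cHQ : CommGroup (↥H ⧸ frattini ↥H) :=
    { (inferInstance : Group (↥H ⧸ frattini ↥H)) with mul_comm := hcommHQ }
  have hexpHQ : ∀ x : ↥H ⧸ frattini ↥H, x ^ p = 1 := by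
    intro x
    induction x using QuotientGroup.induction_on with
    | H a =>
    rw [← QuotientGroup.mk_pow, QuotientGroup.eq_one_iff]
    exact hfratH.1 a
  have hexpAQ : ∀ x : ↥A ⧸ K.subgroupOf A, x ^ p = 1 := by
    intro x
    induction x using QuotientGroup.induction_on with
    | H a =>
    rw [← QuotientGroup.mk_pow, QuotientGroup.eq_one_iff, Subgroup.mem_subgroupOf]
    exact hpowK (a : G) a.2
  obtain ⟨e⟩ := hiso
  have r1 : Group.rank G = Group.rank (G ⧸ frattini G) := rank_quotient_frattini G
  have r2 : Group.rank (G ⧸ frattini G)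
      = Group.rank ((↥A ⧸ K.subgroupOf A) × (↥H ⧸ frattini ↥H)) := Group.rank_congr e
  have r3 : Group.rank ((↥A ⧸ K.subgroupOf A) × (↥H ⧸ frattini ↥H))
      = Group.rank (↥A ⧸ K.subgroupOf A) + Group.rank (↥H ⧸ frattini ↥H) :=
    rank_prod_of_exp_p p _ _ hexpAQ hexpHQ
  have r4 : Group.rank ↥H = Group.rank (↥H ⧸ frattini ↥H) := rank_quotient_frattini ↥H
  omega
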